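/- Let n ≥ 1, let G = (ZMod 2)ⁿ written additively with components g = (g^{(1)},…,g^{(n)}), and define ω_n : Gⁿ → Circle by ω_n(g₁,…,g_n) = (−1)^{g₁^{(1)}·g₂^{(2)}⋯g_n^{(n)}} (exponent computed from representatives in {0,1}). Let e_j ∈ G denote the element with j-th component 1 and all other components 0. Then: (i) ω_n is an inhomogeneous n-cocycle of G; (ii) the slant product satisfies ω_n^{(e₁)}(g₂,…,g_n) = (−1)^{g₂^{(2)}·g₃^{(3)}⋯g_n^{(n)}} for all g₂,…,g_n ∈ G; and (iii) the full sequential slant product is ω_n^{(e₁,e₂,…,e_n)} = −1. -/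

import Mathlib

/-- The element `−1` of the circle group. -/
noncomputable def negOne : Circle := ⟨-1, by simp [Submonoid.unitSphere, Metric.mem_sphere]⟩

/-- The inhomogeneous `n`-cocycle condition for an additively written abelian group. -/
def IsInhomoCocycleAdd {G : Type*} [AddGroup G] {n : ℕ}
    (ω : (Fin n → G) → Circle) : Prop :=
  ∀ g : Fin (n + 1) → G,
    (ω fun i => g i.succ) *
      (∏ j : Fin n,
        (ω (Fin.contractNth j.castSucc (· + ·) g)) ^ ((-1 : ℤ) ^ ((j : ℕ) + 1))) *
      (ω fun i => g i.castSucc) ^ ((-1 : ℤ) ^ (n + 1)) = 1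

/-- The slant product `i_g ω = ω^{(g)}` of an inhomogeneous cochain of `k + 1` variables
(additive group version):
`ω^{(g)}(g₁,…,g_k) = ω(g,g₁,…,g_k) · ∏_{i=1}^{k} ω(g₁,…,g_i, g, g_{i+1},…,g_k)^{(−1)^i}`. -/
noncomputable def slantAdd {G : Type*} [AddGroup G] {k : ℕ} (g : G)
    (ω : (Fin (k + 1) → G) → Circle) : (Fin k → G) → Circle :=
  fun v => ω (Fin.cons g v) *
    ∏ i : Fin k, (ω (Fin.insertNth i.succ g v)) ^ ((-1 : ℤ) ^ ((i : ℕ) + 1))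

/-- The sequential slant product `ω^{(g₁,…,g_k)} = i_{g_k}⋯i_{g₁} ω ∈ Circle`. -/
noncomputable def seqSlantAdd {G : Type*} [AddGroup G] :
    {k : ℕ} → (Fin k → G) → ((Fin k → G) → Circle) → Circle
  | 0, _, ω => ω Fin.elim0
  | _ + 1, gs, ω => seqSlantAdd (fun i => gs i.succ) (slantAdd (gs 0) ω)

/-- The inhomogeneous `n`-cochain `ω_n(g₁,…,g_n) = (−1)^{g₁^{(1)}·g₂^{(2)}⋯g_n^{(n)}}`
of `G = (ℤ₂)ⁿ` (here `n = m + 1 ≥ 1`), with the exponent computed from representatives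
in `{0,1}`. -/
noncomputable def ωdiag (m : ℕ) :
    (Fin (m + 1) → (Fin (m + 1) → ZMod 2)) → Circle :=
  fun v => negOne ^ (∏ i : Fin (m + 1), (v i i).val)

/-! ### Auxiliary lemmas -/

lemma negOne_mul_negOne : negOne * negOne = 1 := by
  ext
  rw [Circle.coe_mul]
  simp [negOne]

lemma negOne_sq : negOne ^ 2 = 1 := by rw [sq, negOne_mul_negOne]

/-- The character `a ↦ (−1)^a` of `ℤ₂` with values in the circle. -/
noncomputable def χ : ZMod 2 → Circle := fun a => negOne ^ a.val

lemma negOne_pow_mod (k : ℕ) : negOne ^ k = negOne ^ (k % 2) := by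
  conv_lhs => rw [← Nat.div_add_mod k 2]
  rw [pow_add, pow_mul, negOne_sq, one_pow, one_mul]

lemma negOne_pow_natCast (k : ℕ) : negOne ^ k = χ (k : ZMod 2) := by
  rw [χ, ZMod.val_natCast, negOne_pow_mod]

lemma χ_zero : χ 0 = 1 := by simp [χ]

lemma χ_one : χ 1 = negOne := by rw [χ, show (1 : ZMod 2).val = 1 from rfl, pow_one]

lemma χ_add (a b : ZMod 2) : χ (a + b) = χ a * χ b := by
  rw [χ, ZMod.val_add, ← negOne_pow_mod, pow_add]; rfl

lemma χ_mul_self (a : ZMod 2) : χ a * χ a = 1 := by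
  rw [← χ_add]
  have h : a + a = 0 := by rw [CharTwo.add_self_eq_zero]
  rw [h, χ_zero]

lemma χ_zpow (a : ZMod 2) (e : ℕ) : χ a ^ ((-1 : ℤ) ^ e) = χ a := by
  rcases Nat.even_or_odd e with he | he
  · rw [he.neg_one_pow, zpow_one]
  · rw [he.neg_one_pow, zpow_neg_one, inv_eq_of_mul_eq_one_right (χ_mul_self a)]

lemma χ_sum {ι : Type*} (s : Finset ι) (f : ι → ZMod 2) :
    χ (∑ i ∈ s, f i) = ∏ i ∈ s, χ (f i) := by
  induction s using Finset.cons_induction with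
  | empty => simp [χ_zero]
  | cons i s hi ih => rw [Finset.sum_cons, Finset.prod_cons, χ_add, ih]

/-- A generalized diagonal cochain: the positions of the diagonal are given by `d`. -/
noncomputable def ωgen {n k : ℕ} (d : Fin k → Fin n) :
    (Fin k → (Fin n → ZMod 2)) → Circle :=
  fun v => χ (∏ i : Fin k, v i (d i))

lemma ωgen_apply_val {n k : ℕ} (d : Fin k → Fin n) (v : Fin k → (Fin n → ZMod 2)) :
    ωgen d v = negOne ^ (∏ i : Fin k, (v i (d i)).val) := by
  rw [ωgen, negOne_pow_natCast]
  congr 1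
  push_cast
  exact Finset.prod_congr rfl fun i _ => (ZMod.natCast_rightInverse _).symm

lemma ωdiag_apply (m : ℕ) (v : Fin (m + 1) → (Fin (m + 1) → ZMod 2)) :
    ωdiag m v = χ (∏ i : Fin (m + 1), v i i) := by
  rw [ωdiag, negOne_pow_natCast]
  congr 1
  push_cast
  exact Finset.prod_congr rfl fun i _ => ZMod.natCast_rightInverse _

lemma ωdiag_eq_ωgen (m : ℕ) : ωdiag m = ωgen (id : Fin (m + 1) → Fin (m + 1)) :=
  funext fun v => by rw [ωdiag_apply]; rfl

lemma slant_ωgen {n k : ℕ} (d : Fin (k + 1) → Fin n)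
    (hd : ∀ i : Fin k, d i.succ ≠ d 0) :
    slantAdd (Pi.single (d 0) (1 : ZMod 2)) (ωgen d) = ωgen (d ∘ Fin.succ) := by
  funext v
  rw [slantAdd]
  have h1 : ωgen d (Fin.cons (Pi.single (d 0) (1 : ZMod 2)) v) = ωgen (d ∘ Fin.succ) v := by
    rw [ωgen, ωgen, Fin.prod_univ_succ, Fin.cons_zero, Pi.single_eq_same, one_mul]
    simp only [Fin.cons_succ, Function.comp_apply]
  have h2 : ∀ i : Fin k,
      ωgen d (Fin.insertNth i.succ (Pi.single (d 0) (1 : ZMod 2)) v) = 1 := by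
    intro i
    rw [ωgen]
    set w : Fin (k + 1) → (Fin n → ZMod 2) :=
      Fin.insertNth i.succ (Pi.single (d 0) (1 : ZMod 2)) v with hw
    have h0 : (∏ j : Fin (k + 1), w j (d j)) = 0 := by
      apply Finset.prod_eq_zero (Finset.mem_univ i.succ)
      rw [hw, Fin.insertNth_apply_same, Pi.single_eq_of_ne (hd i)]
    rw [h0, χ_zero]
  rw [h1]
  have h3 : ∀ i : Fin k,
      (ωgen d (Fin.insertNth i.succ (Pi.single (d 0) (1 : ZMod 2)) v))
        ^ ((-1 : ℤ) ^ ((i : ℕ) + 1)) = 1 := by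
    intro i; rw [h2 i, one_zpow]
  rw [Finset.prod_congr rfl fun i _ => h3 i, Finset.prod_const_one, mul_one]

lemma seq_ωgen {n : ℕ} : ∀ (k : ℕ) (d : Fin k → Fin n), Function.Injective d →
    seqSlantAdd (fun j => Pi.single (d j) (1 : ZMod 2)) (ωgen d) = negOne
  | 0, d, _ => by
    rw [seqSlantAdd, ωgen]
    simp [χ_one]
  | k + 1, d, hd => by
    rw [seqSlantAdd]
    have h0 : slantAdd (Pi.single (d 0) (1 : ZMod 2)) (ωgen d) = ωgen (d ∘ Fin.succ) :=
      slant_ωgen d fun i h => Fin.succ_ne_zero i (hd h)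
    rw [h0]
    exact seq_ωgen k (d ∘ Fin.succ) (hd.comp (Fin.succ_injective k))

lemma ωdiag_cocycle (m : ℕ) : IsInhomoCocycleAdd (ωdiag m) := by
  intro g
  simp only [ωdiag_apply, χ_zpow]
  rw [← χ_sum Finset.univ
    (fun j : Fin (m + 1) => ∏ i : Fin (m + 1), Fin.contractNth j.castSucc (· + ·) g i i),
    ← χ_add, ← χ_add, ← χ_zero]
  congr 1
  set P : ℕ → ZMod 2 :=
    fun t => ∏ i : Fin (m + 1), if (i : ℕ) < t then g i.castSucc i else g i.succ i with hP
  have hQ : ∀ (j : Fin (m + 1)) (f : Fin (m + 1) → ZMod 2),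
      ∏ i : Fin (m + 1), f i = f j * ∏ i ∈ Finset.univ.erase j, f i :=
    fun j f => (Finset.mul_prod_erase _ f (Finset.mem_univ j)).symm
  have hB : ∀ j : Fin (m + 1),
      (∏ i : Fin (m + 1), Fin.contractNth j.castSucc (· + ·) g i i)
        = P ((j : ℕ) + 1) + P (j : ℕ) := by
    intro j
    have hCe : ∀ i ∈ Finset.univ.erase j,
        Fin.contractNth j.castSucc (· + ·) g i i
          = if (i : ℕ) < (j : ℕ) then g i.castSucc i else g i.succ i := by
      intro i hi
      have hij : (i : ℕ) ≠ (j : ℕ) := fun h => (Finset.mem_erase.mp hi).1 (Fin.ext h)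
      rcases lt_or_gt_of_ne hij with h | h
      · rw [Fin.contractNth_apply_of_lt _ _ _ _ (by simpa using h), if_pos h]
      · rw [Fin.contractNth_apply_of_gt _ _ _ _ (by simpa using h), if_neg (by omega)]
    have h1e : ∀ i ∈ Finset.univ.erase j,
        (if (i : ℕ) < (j : ℕ) + 1 then g i.castSucc i else g i.succ i)
          = if (i : ℕ) < (j : ℕ) then g i.castSucc i else g i.succ i := by
      intro i hi
      have hij : (i : ℕ) ≠ (j : ℕ) := fun h => (Finset.mem_erase.mp hi).1 (Fin.ext h)
      by_cases h : (i : ℕ) < (j : ℕ)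
      · rw [if_pos (by omega), if_pos h]
      · rw [if_neg (by omega), if_neg h]
    rw [hQ j]; simp only [hP]
    rw [hQ j (fun i => if (i : ℕ) < (j : ℕ) + 1 then g i.castSucc i else g i.succ i)]
    rw [hQ j (fun i => if (i : ℕ) < (j : ℕ) then g i.castSucc i else g i.succ i)]
    rw [Finset.prod_congr rfl hCe, Finset.prod_congr rfl h1e]
    rw [Fin.contractNth_apply_of_eq _ _ _ _ (by simp)]
    rw [if_pos (Nat.lt_succ_self _), if_neg (lt_irrefl _)]
    rw [Pi.add_apply, add_mul]
  rw [Finset.sum_congr rfl fun j _ => hB j]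
  have htel : (∑ j : Fin (m + 1), (P ((j : ℕ) + 1) + P (j : ℕ))) = P (m + 1) + P 0 := by
    calc (∑ j : Fin (m + 1), (P ((j : ℕ) + 1) + P (j : ℕ)))
        = ∑ j ∈ Finset.range (m + 1), (P (j + 1) - P j) := by
          rw [Fin.sum_univ_eq_sum_range (fun t => P (t + 1) + P t) (m + 1)]
          exact Finset.sum_congr rfl fun j _ => (CharTwo.sub_eq_add _ _).symm
      _ = P (m + 1) - P 0 := Finset.sum_range_sub P (m + 1)
      _ = P (m + 1) + P 0 := CharTwo.sub_eq_add _ _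
  rw [htel]
  have hP0 : P 0 = ∏ i : Fin (m + 1), g i.succ i := by simp [hP]
  have hPn : P (m + 1) = ∏ i : Fin (m + 1), g i.castSucc i := by
    rw [hP]; exact Finset.prod_congr rfl fun i _ => if_pos i.isLt
  rw [hP0, hPn]
  have hfin : ∀ x y : ZMod 2, x + (y + x) + y = 0 := by decide
  exact hfin _ _

/-- For `n = m + 1 ≥ 1` and `G = (ℤ₂)ⁿ`:
(i) `ω_n(g₁,…,g_n) = (−1)^{g₁^{(1)}⋯g_n^{(n)}}` is an inhomogeneous `n`-cocycle;
(ii) its slant product along `e₁` is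
`ω_n^{(e₁)}(g₂,…,g_n) = (−1)^{g₂^{(2)}·g₃^{(3)}⋯g_n^{(n)}}`;
(iii) the full sequential slant product is `ω_n^{(e₁,…,e_n)} = −1`. -/
theorem ωdiag_slant_products (m : ℕ) :
    IsInhomoCocycleAdd (ωdiag m) ∧
    (∀ v : Fin m → (Fin (m + 1) → ZMod 2),
      slantAdd (Pi.single (0 : Fin (m + 1)) (1 : ZMod 2)) (ωdiag m) v =
        negOne ^ (∏ i : Fin m, (v i i.succ).val)) ∧
    seqSlantAdd (fun j : Fin (m + 1) => Pi.single j (1 : ZMod 2)) (ωdiag m) = negOne := by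
  refine ⟨ωdiag_cocycle m, ?_, ?_⟩
  · intro v
    have h := slant_ωgen (id : Fin (m + 1) → Fin (m + 1)) (fun i _h => Fin.succ_ne_zero i _h)
    simp only [id_eq] at h
    rw [ωdiag_eq_ωgen, h, ωgen_apply_val]
    rfl
  · rw [ωdiag_eq_ωgen]
    exact seq_ωgen (m + 1) (id : Fin (m + 1) → Fin (m + 1)) Function.injective_id
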